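/- arXiv:2504.09840 — 2 statements merged into one kernel-verified Lean document; each statement's English description precedes it below -/
import Mathlib

section
/- Let n ≥ 1 and 0 < s < 1. There exists a constant C = C(n,s) such that for every measurable set A ⊂ ℝⁿ of finite Lebesgue measure, the fractional torsion energy satisfies |E(A)| ≤ C |A|^{(n+2s)/n}, i.e. 0 ≥ E(A) ≥ −C |A|^{(n+2s)/n}. -/
open MeasureTheory Metric Set

noncomputable section

/-- `ℝⁿ` as a Euclidean space. -/
abbrev Eucl (n : ℕ) := EuclideanSpace ℝ (Fin n)

/-- The integrand of the squared Gagliardo seminorm `[u]²`. -/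
def gagIntegrand (n : ℕ) (s : ℝ) (u : Eucl n → ℝ) : Eucl n × Eucl n → ℝ :=
  fun p => (u p.1 - u p.2) ^ 2 / dist p.1 p.2 ^ ((n : ℝ) + 2 * s)

/-- The squared Gagliardo seminorm `[u]²`. -/
def gagliardoSq (n : ℕ) (s : ℝ) (u : Eucl n → ℝ) : ℝ :=
  ∫ p : Eucl n × Eucl n, gagIntegrand n s u p

/-- The fractional torsion energy of a measurable set `D ⊆ ℝⁿ`:
`E(D) = inf { (1/2)[u]² − ∫ u : u ∈ W̃^{s,2}(ℝⁿ) ∩ L¹(ℝⁿ), u = 0 a.e. on ℝⁿ ∖ D }`. -/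
def torsionEnergy (n : ℕ) (s : ℝ) (D : Set (Eucl n)) : ℝ :=
  sInf { e : ℝ | ∃ u : Eucl n → ℝ,
    MemLp u 2 (volume : Measure (Eucl n)) ∧
    Integrable u (volume : Measure (Eucl n)) ∧
    Integrable (gagIntegrand n s u) (volume : Measure (Eucl n × Eucl n)) ∧
    (∀ᵐ x ∂(volume : Measure (Eucl n)), x ∉ D → u x = 0) ∧
    e = (1 / 2) * gagliardoSq n s u - ∫ x, u x }

/-- The pointwise nonnegativity of the Gagliardo integrand. -/
lemma gagIntegrand_nonneg (n : ℕ) (s : ℝ) (u : Eucl n → ℝ) (p : Eucl n × Eucl n) :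
    0 ≤ gagIntegrand n s u p :=
  div_nonneg (sq_nonneg _) (Real.rpow_nonneg dist_nonneg _)

/-- The zero function gives energy `0`. -/
lemma zero_mem_torsion_set (n : ℕ) (s : ℝ) (A : Set (Eucl n)) :
    (0 : ℝ) ∈ { e : ℝ | ∃ u : Eucl n → ℝ,
      MemLp u 2 (volume : Measure (Eucl n)) ∧
      Integrable u (volume : Measure (Eucl n)) ∧
      Integrable (gagIntegrand n s u) (volume : Measure (Eucl n × Eucl n)) ∧
      (∀ᵐ x ∂(volume : Measure (Eucl n)), x ∉ A → u x = 0) ∧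
      e = (1 / 2) * gagliardoSq n s u - ∫ x, u x } := by
  have hgag0 : gagIntegrand n s (fun _ => (0:ℝ)) = fun _ => (0:ℝ) := by
    funext p; simp [gagIntegrand]
  refine ⟨fun _ => 0, MemLp.zero', integrable_zero _ _ _, ?_, ?_, ?_⟩
  · rw [hgag0]; exact integrable_zero _ _ _
  · filter_upwards with x _; rfl
  · simp [gagliardoSq, hgag0]

set_option maxHeartbeats 1000000 in
/-- **Scaling bound on the torsion energy**: there is `C = C(n,s)` with
`0 ≥ E(A) ≥ −C|A|^{(n+2s)/n}` for every measurable `A ⊆ ℝⁿ` of finite measure. -/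
theorem torsion_energy_scaling_bound
    (n : ℕ) (hn : 1 ≤ n) (s : ℝ) (hs0 : 0 < s) (hs1 : s < 1) :
    ∃ C : ℝ, 0 < C ∧
      ∀ A : Set (Eucl n), MeasurableSet A → volume A < ⊤ →
        torsionEnergy n s A ≤ 0 ∧
        -(C * (volume A).toReal ^ (((n : ℝ) + 2 * s) / n)) ≤ torsionEnergy n s A := by
  classical
  haveI : Nonempty (Fin n) := ⟨⟨0, hn⟩⟩
  have hn0 : (0:ℝ) < n := by exact_mod_cast hn
  set q : ℝ := (n : ℝ) + 2 * s with hq_def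
  have hq : 0 < q := by positivity
  set ω : ℝ := (volume (ball (0 : Eucl n) 1)).toReal with hω_def
  have hω : 0 < ω := by
    refine ENNReal.toReal_pos (measure_ball_pos _ _ one_pos).ne' measure_ball_lt_top.ne
  set C : ℝ := (2 / ω) ^ (q / n) / 2 with hC_def
  have hC : 0 < C := by positivity
  refine ⟨C, hC, fun A hA hAfin => ?_⟩
  set m := (volume A).toReal with hm_def
  have hm0 : 0 ≤ m := ENNReal.toReal_nonneg
  set S := { e : ℝ | ∃ u : Eucl n → ℝ,
    MemLp u 2 (volume : Measure (Eucl n)) ∧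
    Integrable u (volume : Measure (Eucl n)) ∧
    Integrable (gagIntegrand n s u) (volume : Measure (Eucl n × Eucl n)) ∧
    (∀ᵐ x ∂(volume : Measure (Eucl n)), x ∉ A → u x = 0) ∧
    e = (1 / 2) * gagliardoSq n s u - ∫ x, u x } with hS_def
  have hzero : (0:ℝ) ∈ S := zero_mem_torsion_set n s A
  have hvol : (volume : Measure (Eucl n × Eucl n))
      = (volume : Measure (Eucl n)).prod volume := Measure.volume_eq_prod _ _
  -- main lower bound for each admissible u
  have hbound : ∀ e ∈ S, -(C * m ^ (q / n)) ≤ e := by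
    rintro e ⟨u, hu2, hu1, hG, h0, rfl⟩
    have hI_int : Integrable (fun x => (u x)^2) (volume : Measure (Eucl n)) :=
      hu2.integrable_sq
    have hIpos : 0 ≤ ∫ x, (u x)^2 := integral_nonneg fun x => sq_nonneg _
    have hGnonneg : 0 ≤ gagliardoSq n s u :=
      integral_nonneg (gagIntegrand_nonneg n s u)
    rcases hm0.eq_or_lt with hm | hm
    · -- measure zero case
      have hA0 : volume A = 0 := by
        rcases (ENNReal.toReal_eq_zero_iff _).1 hm.symm with h | h
        · exact h
        · exact absurd h hAfin.ne
      have hu0 : u =ᵐ[volume] 0 := by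
        have hAe : ∀ᵐ x ∂(volume : Measure (Eucl n)), x ∉ A := by
          rw [ae_iff]; simpa using hA0
        filter_upwards [h0, hAe] with x h1 h2; exact h1 h2
      have hint0 : ∫ x, u x = 0 := by
        rw [integral_congr_ae hu0]; simp
      have : m ^ (q / n) = 0 := by
        rw [← hm, Real.zero_rpow (by positivity)]
      rw [this, mul_zero, neg_zero, hint0]
      linarith
    · -- positive measure case
      set r : ℝ := (2 * m / ω) ^ ((n:ℝ)⁻¹) with hr_def
      have hbase : (0:ℝ) < 2 * m / ω := by positivity
      have hr0 : 0 < r := Real.rpow_pos_of_pos hbase _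
      have hrq : r ^ q = (2 * m / ω) ^ (q / n) := by
        rw [hr_def, ← Real.rpow_mul hbase.le, inv_mul_eq_div]
      have hrqpos : 0 < r ^ q := Real.rpow_pos_of_pos hr0 q
      have hballR : ∀ x : Eucl n, (volume (ball x r)).toReal = 2 * m := by
        intro x
        have hrn : r ^ (n : ℕ) = 2 * m / ω :=
          Real.rpow_inv_natCast_pow hbase.le (by omega)
        rw [Measure.addHaar_ball volume x hr0.le, finrank_euclideanSpace_fin, hrn,
          ENNReal.toReal_mul, ENNReal.toReal_ofReal hbase.le, ← hω_def]
        field_simp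
      set κ : ℝ := m / r ^ q with hκ_def
      have hκ : 0 < κ := by positivity
      -- the comparison function
      set F' : Eucl n × Eucl n → ℝ :=
        fun p => (Aᶜ.indicator (fun _ => (1:ℝ)) p.2) * ((u p.1)^2 / dist p.1 p.2 ^ q)
        with hF'_def
      have hF'nonneg : ∀ p, 0 ≤ F' p := fun p =>
        mul_nonneg (Set.indicator_nonneg (fun _ _ => zero_le_one) _)
          (div_nonneg (sq_nonneg _) (Real.rpow_nonneg dist_nonneg _))
      have hF'm : AEStronglyMeasurable F'
          ((volume : Measure (Eucl n)).prod volume) := by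
        have h1 : AEStronglyMeasurable (fun p : Eucl n × Eucl n => u p.1)
            ((volume : Measure (Eucl n)).prod volume) :=
          hu2.aestronglyMeasurable.comp_quasiMeasurePreserving
            Measure.quasiMeasurePreserving_fst
        have h2 : Measurable (fun p : Eucl n × Eucl n =>
            Aᶜ.indicator (fun _ => (1:ℝ)) p.2) :=
          (measurable_const.indicator hA.compl).comp measurable_snd
        have h3 : Continuous (fun p : Eucl n × Eucl n => dist p.1 p.2 ^ q) :=
          continuous_dist.rpow_const (fun _ => Or.inr hq.le)
        have h4 : AEStronglyMeasurable
            (fun p : Eucl n × Eucl n => (u p.1)^2 / dist p.1 p.2 ^ q)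
            ((volume : Measure (Eucl n)).prod volume) := by
          simp only [pow_two]
          exact ((h1.aemeasurable.mul h1.aemeasurable).div
            h3.measurable.aemeasurable).aestronglyMeasurable
        exact h2.aestronglyMeasurable.mul h4
      have h0' : ∀ᵐ p ∂((volume : Measure (Eucl n)).prod volume),
          p.2 ∉ A → u p.2 = 0 :=
        Measure.quasiMeasurePreserving_snd.tendsto_ae.eventually h0
      have hF'le : ∀ᵐ p ∂((volume : Measure (Eucl n)).prod volume),
          F' p ≤ gagIntegrand n s u p := by
        filter_upwards [h0'] with p hp
        by_cases hpA : p.2 ∈ A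
        · have hind : Aᶜ.indicator (fun _ => (1:ℝ)) p.2 = 0 :=
            Set.indicator_of_notMem (by simp [hpA]) _
          rw [hF'_def]; simp only [hind, zero_mul]
          exact gagIntegrand_nonneg n s u p
        · have hind : Aᶜ.indicator (fun _ => (1:ℝ)) p.2 = 1 :=
            Set.indicator_of_mem (Set.mem_compl hpA) _
          rw [hF'_def]; simp only [hind, one_mul]
          rw [gagIntegrand, hp hpA, sub_zero]
      have hGprod : Integrable (gagIntegrand n s u)
          ((volume : Measure (Eucl n)).prod volume) := by rwa [hvol] at hG
      have hF'int : Integrable F' ((volume : Measure (Eucl n)).prod volume) := by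
        refine hGprod.mono' hF'm ?_
        filter_upwards [hF'le] with p hp
        rw [Real.norm_eq_abs, abs_of_nonneg (hF'nonneg p)]; exact hp
      -- inner kernel bound
      have hinner : ∀ᵐ x ∂(volume : Measure (Eucl n)),
          κ * (u x)^2 ≤ ∫ y, F' (x, y) := by
        filter_upwards [hF'int.prod_right_ae] with x hx
        set gx : Eucl n → ℝ :=
          (Aᶜ ∩ ball x r).indicator (fun _ => (u x)^2 / r ^ q) with hgx_def
        have hmeas_set : MeasurableSet (Aᶜ ∩ ball x r) :=
          hA.compl.inter measurableSet_ball
        have hgx_int : Integrable gx (volume : Measure (Eucl n)) := by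
          rw [hgx_def, integrable_indicator_iff hmeas_set]
          exact integrableOn_const
            (lt_of_le_of_lt (measure_mono inter_subset_right) measure_ball_lt_top).ne
        have hy : ∀ᵐ y ∂(volume : Measure (Eucl n)), y ≠ x := by
          rw [ae_iff]
          simpa using measure_singleton (x : Eucl n)
        have hgx_le : ∀ᵐ y ∂(volume : Measure (Eucl n)), gx y ≤ F' (x, y) := by
          filter_upwards [hy] with y hyx
          by_cases hy2 : y ∈ Aᶜ ∩ ball x r
          · have hd0 : 0 < dist x y := dist_pos.2 (Ne.symm hyx)
            have hdr : dist x y ≤ r := by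
              have := hy2.2; rw [mem_ball] at this
              rw [dist_comm]; exact this.le
            have hind : Aᶜ.indicator (fun _ => (1:ℝ)) y = 1 :=
              Set.indicator_of_mem hy2.1 _
            rw [hgx_def, Set.indicator_of_mem hy2, hF'_def]
            simp only [hind, one_mul]
            exact div_le_div_of_nonneg_left (sq_nonneg _)
              (Real.rpow_pos_of_pos hd0 q) (Real.rpow_le_rpow hd0.le hdr hq.le)
          · rw [hgx_def, Set.indicator_of_notMem hy2]
            exact hF'nonneg (x, y)
        have hle := integral_mono_ae hgx_int hx hgx_le
        rw [hgx_def, integral_indicator_const _ hmeas_set, smul_eq_mul] at hle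
        have hvol1 : m ≤ (volume (Aᶜ ∩ ball x r)).toReal := by
          have hsum := measure_inter_add_diff (μ := (volume : Measure (Eucl n))) (ball x r) hA
          have hseteq : ball x r \ A = Aᶜ ∩ ball x r := by
            rw [diff_eq, inter_comm]
          have hfin1 : volume (ball x r ∩ A) ≠ ⊤ :=
            (lt_of_le_of_lt (measure_mono inter_subset_right) hAfin).ne
          have hfin2 : volume (ball x r \ A) ≠ ⊤ :=
            (lt_of_le_of_lt (measure_mono diff_subset) measure_ball_lt_top).ne
          have htr := congrArg ENNReal.toReal hsum
          rw [ENNReal.toReal_add hfin1 hfin2, hballR x, hseteq] at htr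
          have hle2 : (volume (ball x r ∩ A)).toReal ≤ m :=
            ENNReal.toReal_mono hAfin.ne (measure_mono inter_subset_right)
          linarith
        have h3 : 0 ≤ (u x)^2 / r ^ q := div_nonneg (sq_nonneg _) hrqpos.le
        calc κ * (u x)^2 = m * ((u x)^2 / r ^ q) := by
              rw [hκ_def, div_mul_eq_mul_div, mul_div_assoc]
          _ ≤ (volume (Aᶜ ∩ ball x r)).toReal * ((u x)^2 / r ^ q) :=
              mul_le_mul_of_nonneg_right hvol1 h3
          _ ≤ ∫ y, F' (x, y) := hle
      -- Step B: κ * ∫ u² ≤ gagliardoSq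
      have hmain : κ * (∫ x, (u x)^2) ≤ gagliardoSq n s u := by
        have h1 : ∫ x, κ * (u x)^2 ≤ ∫ x, ∫ y, F' (x, y) :=
          integral_mono_ae (hI_int.const_mul κ) hF'int.integral_prod_left hinner
        have h2 : ∫ x, ∫ y, F' (x, y) = ∫ p, F' p
            ∂((volume : Measure (Eucl n)).prod volume) :=
          (integral_prod F' hF'int).symm
        have h3 : (∫ p, F' p ∂((volume : Measure (Eucl n)).prod volume))
            ≤ ∫ p, gagIntegrand n s u p ∂((volume : Measure (Eucl n)).prod volume) :=
          integral_mono_ae hF'int hGprod hF'le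
        have h4 : gagliardoSq n s u
            = ∫ p, gagIntegrand n s u p ∂((volume : Measure (Eucl n)).prod volume) := by
          rw [gagliardoSq, hvol]
        rw [integral_const_mul] at h1
        linarith
      -- Step A: ∫ u ≤ (κ/2) ∫ u² + m/(2κ)
      have hstepA : ∫ x, u x ≤ (κ/2) * (∫ x, (u x)^2) + m / (2*κ) := by
        set ε : ℝ := κ / 2 with hε_def
        have hε : 0 < ε := by positivity
        have hind_int : Integrable (A.indicator (fun _ => 1/(4*ε)))
            (volume : Measure (Eucl n)) := by
          rw [integrable_indicator_iff hA]
          exact integrableOn_const hAfin.ne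
        have hgint : Integrable (fun x => ε * (u x)^2 + A.indicator (fun _ => 1/(4*ε)) x)
            (volume : Measure (Eucl n)) := (hI_int.const_mul ε).add hind_int
        have hle : ∀ᵐ x ∂(volume : Measure (Eucl n)),
            u x ≤ ε * (u x)^2 + A.indicator (fun _ => 1/(4*ε)) x := by
          filter_upwards [h0] with x hx
          by_cases hxA : x ∈ A
          · rw [Set.indicator_of_mem hxA]
            have h4 : (0:ℝ) < 4*ε := by positivity
            have key : (u x - ε*u x^2) * (4*ε) ≤ 1 := by
              nlinarith [sq_nonneg (2*ε*u x - 1)]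
            have := (le_div_iff₀ h4).2 key
            linarith
          · rw [hx hxA, Set.indicator_of_notMem hxA]
            positivity
        have hint := integral_mono_ae hu1 hgint hle
        rw [integral_add (hI_int.const_mul ε) hind_int, integral_const_mul,
          integral_indicator_const _ hA, smul_eq_mul] at hint
        have heq : m * (1/(4*ε)) = m / (2*κ) := by
          rw [hε_def]; field_simp; ring
        rw [measureReal_def, ← hm_def] at hint
        linarith [hint, heq.symm.le, heq.le]
      -- combine
      have hcomb : -(m / (2*κ)) ≤ (1/2) * gagliardoSq n s u - ∫ x, u x := by
        have e1 : (1/2) * (κ * ∫ x, (u x)^2) ≤ (1/2) * gagliardoSq n s u := by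
          linarith [hmain]
        have e2 : (κ/2) * (∫ x, (u x)^2) = (1/2) * (κ * ∫ x, (u x)^2) := by ring
        linarith [e1, hstepA, e2]
      have hfinal : m / (2*κ) = C * m ^ (q / n) := by
        have h1 : m / (2*κ) = r ^ q / 2 := by
          rw [hκ_def]
          field_simp
        have h2mω : 2 * m / ω = (2 / ω) * m := by ring
        rw [h1, hrq, h2mω, Real.mul_rpow (by positivity) hm.le, hC_def]
        ring
      rw [← hfinal]
      exact hcomb
  have hSne : S.Nonempty := ⟨0, hzero⟩
  have hbdd : BddBelow S := ⟨-(C * m ^ (q / n)), fun e he => hbound e he⟩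
  constructor
  · exact csInf_le hbdd hzero
  · exact le_csInf hSne hbound
end
end

section
/- (Density of the support from non-degeneracy and Hölder continuity.) Let n ≥ 1, 0 < s < 1, c > 0 and L > 0. There is a constant C = C(n, s, c, L) > 0 with the following property: if r > 0, x₀ ∈ ℝⁿ, and u : ℝⁿ → ℝ is continuous with |u(x) − u(y)| ≤ L|x−y|^s for all x, y ∈ B_r(x₀), and sup_{B_{r/2}(x₀)} |u| ≥ c r^s, then |{x ∈ B_r(x₀) : u(x) ≠ 0}| ≥ C rⁿ, where |·| denotes Lebesgue measure. -/
open MeasureTheory Metric Set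

noncomputable section

/-- **Density of the support from non-degeneracy and Hölder continuity.** There is
`C = C(n,s,c,L) > 0` such that whenever `u` is continuous, `s`-Hölder with constant `L`
on `B_r(x₀)`, and `sup_{B_{r/2}(x₀)} |u| ≥ c r^s`, then `|{u ≠ 0} ∩ B_r(x₀)| ≥ C rⁿ`. -/
theorem support_density
    (n : ℕ) (hn : 1 ≤ n) (s : ℝ) (hs0 : 0 < s) (hs1 : s < 1)
    (c L : ℝ) (hc : 0 < c) (hL : 0 < L) :
    ∃ C : ℝ, 0 < C ∧
      ∀ (r : ℝ), 0 < r → ∀ (x₀ : Eucl n) (u : Eucl n → ℝ),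
        Continuous u →
        (∀ x ∈ Metric.ball x₀ r, ∀ y ∈ Metric.ball x₀ r,
          |u x - u y| ≤ L * dist x y ^ s) →
        c * r ^ s ≤ (⨆ x ∈ Metric.ball x₀ (r / 2), |u x|) →
        C * r ^ (n : ℝ) ≤ (volume {x | x ∈ Metric.ball x₀ r ∧ u x ≠ 0}).toReal := by
  set m : ℝ := min ((c / (4 * L)) ^ (s⁻¹)) (1 / 2) with hm
  have hm0 : 0 < m := lt_min (Real.rpow_pos_of_pos (by positivity) _) (by norm_num)
  have hvol0 : 0 < (volume (ball (0 : Eucl n) 1)).toReal :=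
    ENNReal.toReal_pos (measure_ball_pos volume _ one_pos).ne' measure_ball_lt_top.ne
  refine ⟨(volume (ball (0 : Eucl n) 1)).toReal * m ^ n, by positivity, ?_⟩
  intro r hr x₀ u hu hH hsup
  haveI : Nonempty (Fin n) := ⟨⟨0, hn⟩⟩
  haveI : Nontrivial (Eucl n) := inferInstance
  have hrs : 0 < r ^ s := Real.rpow_pos_of_pos hr s
  have h1 : c * r ^ s / 2 < ⨆ x ∈ ball x₀ (r / 2), |u x| :=
    lt_of_lt_of_le (by nlinarith) hsup
  obtain ⟨x₁, hx1⟩ := exists_lt_of_lt_ciSup h1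
  have hx₁mem : x₁ ∈ ball x₀ (r / 2) := by
    by_contra h
    simp only [h, iSup_false] at hx1
    rw [iSup_of_empty', Real.sSup_empty] at hx1
    nlinarith
  have hx1' : c * r ^ s / 2 < |u x₁| := by
    rwa [ciSup_pos hx₁mem] at hx1
  set ρ : ℝ := r * m with hρ
  have hρ0 : 0 < ρ := mul_pos hr hm0
  have hρhalf : ρ ≤ r / 2 := by
    have : m ≤ 1 / 2 := min_le_right _ _
    calc ρ ≤ r * (1 / 2) := by nlinarith
    _ = r / 2 := by ring
  have hms : m ^ s ≤ c / (4 * L) := by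
    have h1 : m ^ s ≤ ((c / (4 * L)) ^ (s⁻¹)) ^ s :=
      Real.rpow_le_rpow hm0.le (min_le_left _ _) hs0.le
    rwa [Real.rpow_inv_rpow (by positivity) hs0.ne'] at h1
  have hρs : L * ρ ^ s ≤ c * r ^ s / 4 := by
    have : ρ ^ s = r ^ s * m ^ s := Real.mul_rpow hr.le hm0.le
    rw [this]
    have h2 : L * (r ^ s * m ^ s) ≤ L * (r ^ s * (c / (4 * L))) := by
      have : r ^ s * m ^ s ≤ r ^ s * (c / (4 * L)) := by nlinarith
      nlinarith
    calc L * (r ^ s * m ^ s) ≤ L * (r ^ s * (c / (4 * L))) := h2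
    _ = c * r ^ s / 4 := by field_simp
  have hx₁ball : x₁ ∈ ball x₀ r :=
    ball_subset_ball (by linarith) hx₁mem
  have hsub : ball x₁ ρ ⊆ {x | x ∈ ball x₀ r ∧ u x ≠ 0} := by
    intro x hx
    have hdx : dist x x₁ < ρ := mem_ball.mp hx
    have hd₁ : dist x₁ x₀ < r / 2 := mem_ball.mp hx₁mem
    have hxball : x ∈ ball x₀ r := by
      rw [mem_ball]
      calc dist x x₀ ≤ dist x x₁ + dist x₁ x₀ := dist_triangle _ _ _
      _ < ρ + r / 2 := by linarith
      _ ≤ r := by linarith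
    refine ⟨hxball, fun h0 => ?_⟩
    have hH' := hH x hxball x₁ hx₁ball
    rw [h0, zero_sub, abs_neg] at hH'
    have hd : dist x x₁ ^ s ≤ ρ ^ s :=
      Real.rpow_le_rpow dist_nonneg hdx.le hs0.le
    have : L * dist x x₁ ^ s ≤ c * r ^ s / 4 := le_trans (by nlinarith) hρs
    nlinarith
  have hfin : volume {x | x ∈ ball x₀ r ∧ u x ≠ 0} ≠ ⊤ := by
    have hsub' : {x | x ∈ ball x₀ r ∧ u x ≠ 0} ⊆ ball x₀ r := fun x hx => hx.1
    exact (lt_of_le_of_lt (measure_mono hsub') measure_ball_lt_top).ne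
  have hball : volume (ball x₁ ρ) =
      ENNReal.ofReal (ρ ^ n) * volume (ball (0 : Eucl n) 1) := by
    have := Measure.addHaar_ball (volume : Measure (Eucl n)) x₁ hρ0.le
    simpa [finrank_euclideanSpace_fin] using this
  have hle : (volume (ball x₁ ρ)).toReal ≤
      (volume {x | x ∈ ball x₀ r ∧ u x ≠ 0}).toReal :=
    ENNReal.toReal_mono hfin (measure_mono hsub)
  have heq : (volume (ball x₁ ρ)).toReal =
      (volume (ball (0 : Eucl n) 1)).toReal * m ^ n * r ^ (n : ℝ) := by
    rw [hball, ENNReal.toReal_mul, ENNReal.toReal_ofReal (by positivity),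
      Real.rpow_natCast]
    rw [hρ, mul_pow]
    ring
  linarith [heq ▸ hle]
end
end
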